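/- arXiv:2111.02297 — 2 statements merged into one kernel-verified Lean document; each statement's English description precedes it below -/
import Mathlib

section
/- Let n ≥ 1 be an integer, let x, y ∈ ℂ^n each have pairwise distinct entries and satisfy (∏_{i=1}^n x_i)·(∏_{j=1}^n y_j) = 1, and let t ∈ ℂ satisfy (max_i |x_i|)·(max_j |y_j|)·|t| < 1 (this forces |t| < 1). Then the family (λ_x(m₁,…,m_{n−1},0) λ_y(m₁,…,m_{n−1},0) t^{m₁+⋯+m_{n−1}}), indexed by tuples m ∈ ℤ^{n−1} with m₁ ≥ … ≥ m_{n−1} ≥ 0, is absolutely summable, with sum (1 − t^n) · ∏_{i=1}^{n} ∏_{j=1}^{n} (1 − x_i y_j t)^{-1}. -/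
open Finset Equiv Matrix



noncomputable def Dd {n : ℕ} (x : Fin n → ℂ) (l : Fin n → ℕ) : ℂ :=
  (Matrix.of fun i j : Fin n => x j ^ l i).det

lemma Dd_apply {n : ℕ} (x : Fin n → ℂ) (l : Fin n → ℕ) :
    Dd x l = ∑ σ : Perm (Fin n), ((Perm.sign σ : ℤ) : ℂ) * ∏ i, x i ^ l (σ i) := by
  rw [Dd, Matrix.det_apply]
  simp [Units.smul_def]

lemma Dd_comp {n : ℕ} (x : Fin n → ℂ) (l : Fin n → ℕ) (σ : Perm (Fin n)) :
    Dd x (l ∘ σ) = ((Perm.sign σ : ℤ) : ℂ) * Dd x l := by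
  have : (Matrix.of fun i j : Fin n => x j ^ (l ∘ σ) i)
      = (Matrix.of fun i j : Fin n => x j ^ l i).submatrix σ id := by
    ext i j; rfl
  rw [Dd, this, Matrix.det_permute]
  norm_num [Dd]

lemma Dd_zero {n : ℕ} (x : Fin n → ℂ) (l : Fin n → ℕ) (h : ¬ Function.Injective l) :
    Dd x l = 0 := by
  simp only [Function.Injective, not_forall] at h
  obtain ⟨i, j, hij, hne⟩ := h
  exact Matrix.det_zero_of_row_eq hne (funext fun j' => by simp [hij])

lemma Dd_add_const {n : ℕ} (x : Fin n → ℂ) (l : Fin n → ℕ) (c : ℕ) :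
    Dd x (fun i => l i + c) = (∏ j, x j) ^ c * Dd x l := by
  have : (Matrix.of fun i j : Fin n => x j ^ (l i + c))
      = (Matrix.of fun i j : Fin n => (x j) ^ c * ((Matrix.of fun i j : Fin n => x j ^ l i) i j)) := by
    ext i j; simp [pow_add, mul_comm]
  rw [Dd, this, Matrix.det_mul_row, ← Finset.prod_pow]
  rfl



lemma pi_tsum {R : Type*} [NormedCommRing R] [CompleteSpace R] :
    ∀ (n : ℕ) (f : Fin n → ℕ → R), (∀ i, Summable fun m => ‖f i m‖) →
      Summable (fun l : Fin n → ℕ => ‖∏ i, f i (l i)‖) ∧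
        ∑' l : Fin n → ℕ, ∏ i, f i (l i) = ∏ i, ∑' m, f i m := by
  intro n
  induction n with
  | zero =>
    intro f _
    refine ⟨Summable.of_finite, ?_⟩
    simp [tsum_fintype]
  | succ n ih =>
    intro f hf
    obtain ⟨ihS, ihT⟩ := ih (fun i => f i.succ) (fun i => hf i.succ)
    let e : ℕ × (Fin n → ℕ) ≃ (Fin (n+1) → ℕ) := Fin.consEquiv fun _ => ℕ
    have key : ∀ p : ℕ × (Fin n → ℕ),
        (∏ i, f i (e p i)) = f 0 p.1 * ∏ i : Fin n, f i.succ (p.2 i) := by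
      intro p
      rw [Fin.prod_univ_succ]
      simp [e, Fin.consEquiv]
    have hg : Summable (fun p : ℕ × (Fin n → ℕ) =>
        ‖f 0 p.1 * ∏ i : Fin n, f i.succ (p.2 i)‖) :=
      Summable.mul_norm (f := f 0) (g := fun l : Fin n → ℕ => ∏ i : Fin n, f i.succ (l i))
        (hf 0) ihS
    constructor
    · exact e.summable_iff.mp (hg.congr fun p => by
        rw [Function.comp_apply, key p])
    · rw [← Equiv.tsum_eq e (fun l => ∏ i, f i (l i)), tsum_congr key,
        ← tsum_mul_tsum_of_summable_norm (f := f 0)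
          (g := fun l : Fin n → ℕ => ∏ i : Fin n, f i.succ (l i)) (hf 0) ihS, ihT,
        ← Fin.prod_univ_succ (fun i => ∑' m, f i m)]



lemma pair_prod {n : ℕ} (g : Fin n → Fin n → ℂ) :
    ∏ i, ∏ l ∈ univ.erase i, g i l
      = (∏ i, ∏ j ∈ Ioi i, g i j) * ∏ i, ∏ j ∈ Ioi i, g j i := by
  have h1 : ∀ i : Fin n, univ.erase i = Iio i ∪ Ioi i := by
    intro i; ext a
    simp only [mem_erase, mem_univ, and_true, mem_union, mem_Iio, mem_Ioi]
    exact ne_iff_lt_or_gt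
  have h2 : ∀ i : Fin n, Disjoint (Iio i) (Ioi i) := by
    intro i; rw [Finset.disjoint_left]
    intro a ha hb
    exact absurd (mem_Ioi.mp hb) (not_lt.mpr (le_of_lt (mem_Iio.mp ha)))
  calc ∏ i, ∏ l ∈ univ.erase i, g i l
      = ∏ i, ((∏ l ∈ Iio i, g i l) * ∏ l ∈ Ioi i, g i l) := by
        refine Finset.prod_congr rfl fun i _ => ?_
        rw [h1 i, Finset.prod_union (h2 i)]
    _ = (∏ i, ∏ l ∈ Iio i, g i l) * ∏ i, ∏ l ∈ Ioi i, g i l := Finset.prod_mul_distrib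
    _ = _ := by
        rw [mul_comm]
        congr 1
        exact Finset.prod_comm' (by intro a b; simp)

lemma cauchy_det {n : ℕ} (x y : Fin n → ℂ) (t : ℂ) (ht : t ≠ 0)
    (hy0 : ∀ i, y i ≠ 0) (hy : Function.Injective y)
    (hP : ∀ i j, (1 : ℂ) - x i * y j * t ≠ 0) :
    (Matrix.of fun i j : Fin n => ((1 : ℂ) - x j * y i * t)⁻¹).det
      = (Matrix.vandermonde x).det * (Matrix.vandermonde y).det
          * t ^ (∑ i : Fin n, (n - 1 - (i : ℕ)))
          * ∏ i, ∏ j, ((1 : ℂ) - x i * y j * t)⁻¹ := by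
  classical
  set b : Fin n → ℂ := fun j => y j * t with hb
  have hb0 : ∀ j, b j ≠ 0 := fun j => mul_ne_zero (hy0 j) ht
  have hbinj : Function.Injective b := fun i j h => hy (mul_right_cancel₀ ht h)
  have hPb : ∀ i j, (1:ℂ) - x i * b j ≠ 0 := fun i j => by
    simpa [hb, mul_assoc] using hP i j
  set q : Fin n → Polynomial ℂ :=
    fun j => ∏ l ∈ univ.erase j, (1 - Polynomial.C (b l) * Polynomial.X) with hq
  have hdeg : ∀ j, (q j).natDegree < n := by
    intro j
    have h0 : (q j).natDegree ≤ ∑ l ∈ univ.erase j,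
        ((1 : Polynomial ℂ) - Polynomial.C (b l) * Polynomial.X).natDegree :=
      Polynomial.natDegree_prod_le _ _
    have h1 : ∀ l : Fin n, ((1 : Polynomial ℂ) - Polynomial.C (b l) * Polynomial.X).natDegree ≤ 1 := by
      intro l
      refine le_trans (Polynomial.natDegree_sub_le _ _) ?_
      simp only [Polynomial.natDegree_one, max_le_iff]
      exact ⟨Nat.zero_le 1, le_trans (Polynomial.natDegree_C_mul_le _ _) (le_of_eq Polynomial.natDegree_X)⟩
    have h2 : ∑ l ∈ univ.erase j, ((1 : Polynomial ℂ) - Polynomial.C (b l) * Polynomial.X).natDegree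
        ≤ (univ.erase j).card * 1 := Finset.sum_le_card_nsmul _ _ 1 (fun l _ => h1 l)
    have h3 : (univ.erase j).card = n - 1 := by
      rw [Finset.card_erase_of_mem (mem_univ j), Finset.card_univ, Fintype.card_fin]
    have hn : 0 < n := j.pos
    omega
  set B : Matrix (Fin n) (Fin n) ℂ := Matrix.of fun k j : Fin n => (q j).coeff k with hB
  have key : ∀ u : Fin n → ℂ,
      (Matrix.of fun i j : Fin n => (q j).eval (u i)) = (Matrix.vandermonde u) * B := by
    intro u
    ext i j
    rw [Matrix.of_apply, Matrix.mul_apply,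
      Polynomial.eval_eq_sum_range' (hdeg j) (u i),
      ← Fin.sum_univ_eq_sum_range (fun k => (q j).coeff k * u i ^ k)]
    refine Finset.sum_congr rfl fun k _ => ?_
    rw [Matrix.vandermonde_apply, hB, Matrix.of_apply]
    ring
  have detM : (Matrix.of fun i j : Fin n => ∏ l ∈ univ.erase j, (1 - x i * b l)).det
      = (Matrix.vandermonde x).det * B.det := by
    have hMM : (Matrix.of fun i j : Fin n => ∏ l ∈ univ.erase j, (1 - x i * b l))
        = Matrix.of fun i j => (q j).eval (x i) := by
      ext i j
      rw [Matrix.of_apply, Matrix.of_apply, hq, Polynomial.eval_prod]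
      refine Finset.prod_congr rfl fun l _ => ?_
      simp only [Polynomial.eval_sub, Polynomial.eval_one, Polynomial.eval_mul,
        Polynomial.eval_C, Polynomial.eval_X]
      ring
    rw [hMM, key, Matrix.det_mul]
  set c : Fin n → ℂ := fun i => (b i)⁻¹ with hc
  have hcinj : Function.Injective c := fun i j h => hbinj (inv_injective h)
  have detN : (Matrix.of fun i j : Fin n => (q j).eval (c i)).det
      = ∏ i, ∏ l ∈ univ.erase i, (1 - b l * c i) := by
    have hN : (Matrix.of fun i j : Fin n => (q j).eval (c i))
        = Matrix.diagonal (fun i => ∏ l ∈ univ.erase i, (1 - b l * c i)) := by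
      ext i j
      rcases eq_or_ne i j with rfl | hij
      · rw [Matrix.diagonal_apply_eq, Matrix.of_apply, hq, Polynomial.eval_prod]
        exact Finset.prod_congr rfl fun l _ => by simp
      · rw [Matrix.diagonal_apply_ne _ hij, Matrix.of_apply, hq, Polynomial.eval_prod]
        apply Finset.prod_eq_zero (Finset.mem_erase.mpr ⟨hij, Finset.mem_univ i⟩)
        simp [hc, mul_inv_cancel₀ (hb0 i)]
    rw [hN, Matrix.det_diagonal]
  have hvc : (Matrix.vandermonde c).det ≠ 0 := Matrix.det_vandermonde_ne_zero_iff.mpr hcinj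
  have hNC : (Matrix.vandermonde c).det * B.det = ∏ i, ∏ l ∈ univ.erase i, (1 - b l * c i) := by
    rw [← Matrix.det_mul, ← key c]
    exact detN
  have tpow : t ^ (∑ i : Fin n, (n - 1 - (i : ℕ))) = ∏ i : Fin n, ∏ _j ∈ Ioi i, t := by
    rw [← Finset.prod_pow_eq_pow_sum]
    exact Finset.prod_congr rfl fun i _ => by rw [Finset.prod_const, Fin.card_Ioi]
  have hDC : ∏ i, ∏ l ∈ univ.erase i, (1 - b l * c i)
      = (Matrix.vandermonde y).det * t ^ (∑ i : Fin n, (n - 1 - (i : ℕ)))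
          * (Matrix.vandermonde c).det := by
    rw [pair_prod (fun i l => 1 - b l * c i)]
    have hpair : ∀ i j : Fin n, (1 - b j * c i) * (1 - b i * c j)
        = ((y j - y i) * t) * (c j - c i) := by
      intro i j
      have h1 : y i * t ≠ 0 := mul_ne_zero (hy0 i) ht
      have h2 : y j * t ≠ 0 := mul_ne_zero (hy0 j) ht
      have h3 := hy0 i
      have h4 := hy0 j
      simp only [hc, hb]
      field_simp
    calc (∏ i, ∏ j ∈ Ioi i, (1 - b j * c i)) * ∏ i, ∏ j ∈ Ioi i, (1 - b i * c j)
        = ∏ i, ∏ j ∈ Ioi i, (((y j - y i) * t) * (c j - c i)) := by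
          rw [← Finset.prod_mul_distrib]
          refine Finset.prod_congr rfl fun i _ => ?_
          rw [← Finset.prod_mul_distrib]
          exact Finset.prod_congr rfl fun j _ => hpair i j
      _ = _ := by
          simp only [Finset.prod_mul_distrib]
          rw [Matrix.det_vandermonde y, Matrix.det_vandermonde c, tpow]
  have hBdet : B.det = (Matrix.vandermonde y).det * t ^ (∑ i : Fin n, (n - 1 - (i : ℕ))) := by
    apply mul_left_cancel₀ hvc
    rw [hNC, hDC]
    ring
  -- final assembly
  have htr : (Matrix.of fun i j : Fin n => ((1 : ℂ) - x j * y i * t)⁻¹)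
      = (Matrix.of fun i j : Fin n => ((1 : ℂ) - x i * y j * t)⁻¹)ᵀ := by
    ext i j; rfl
  rw [htr, Matrix.det_transpose]
  have hfact : (Matrix.of fun i j : Fin n => ((1 : ℂ) - x i * y j * t)⁻¹)
      = Matrix.of fun i j => (∏ l, (1 - x i * b l))⁻¹
          * ((Matrix.of fun i j : Fin n => ∏ l ∈ univ.erase j, (1 - x i * b l)) i j) := by
    ext i j
    rw [Matrix.of_apply, Matrix.of_apply, Matrix.of_apply]
    have hsplit : ∏ l, (1 - x i * b l) = (1 - x i * b j) * ∏ l ∈ univ.erase j, (1 - x i * b l) :=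
      (Finset.mul_prod_erase univ _ (mem_univ j)).symm
    have hMne : (∏ l ∈ univ.erase j, (1 - x i * b l)) ≠ 0 :=
      Finset.prod_ne_zero_iff.mpr fun l _ => hPb i l
    rw [hsplit, mul_inv, mul_assoc ((1 - x i * b j)⁻¹), inv_mul_cancel₀ hMne, mul_one]
    simp [hb, mul_assoc]
  rw [hfact, Matrix.det_mul_column, detM, hBdet]
  have hprodinv : (∏ i, (∏ l, (1 - x i * b l))⁻¹) = ∏ i, ∏ j, ((1 : ℂ) - x i * y j * t)⁻¹ := by
    refine Finset.prod_congr rfl fun i _ => ?_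
    rw [← Finset.prod_inv_distrib]
    exact Finset.prod_congr rfl fun l _ => by rw [hb, mul_assoc]
  rw [hprodinv]
  ring





lemma strictAnti_gap {n : ℕ} (l : Fin n → ℕ) (h : StrictAnti l) :
    ∀ (d : ℕ) (i j : Fin n), (i : ℕ) + d = (j : ℕ) → l j + d ≤ l i := by
  intro d
  induction d with
  | zero =>
    intro i j hij
    have : i = j := Fin.ext (by omega)
    subst this; omega
  | succ d ih =>
    intro i j hij
    have hj0 : 0 < (j : ℕ) := by omega
    have hj'lt : (j : ℕ) - 1 < n := by omega
    set j' : Fin n := ⟨(j : ℕ) - 1, hj'lt⟩ with hj'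
    have h1 : l j < l j' := h (show j' < j by rw [Fin.lt_def]; simp only [hj']; omega)
    have h2 := ih i j' (by simp only [hj']; omega)
    omega

lemma perm_strictMono_eq_one {n : ℕ} (π : Perm (Fin n)) (h : StrictMono ⇑π) : π = 1 := by
  have h2 : (StrictMono.orderIsoOfSurjective (⇑π) h π.surjective) = OrderIso.refl (Fin n) :=
    Subsingleton.elim _ _
  ext i
  have h1 : (StrictMono.orderIsoOfSurjective (⇑π) h π.surjective) i = π i :=
    congrFun (StrictMono.coe_orderIsoOfSurjective (⇑π) h π.surjective) i
  rw [h2] at h1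
  simp only [OrderIso.refl_apply] at h1
  simp [← h1]

noncomputable def sortedEquiv (n : ℕ) :
    ({l : Fin n → ℕ // StrictAnti l} × Perm (Fin n)) ≃ {l : Fin n → ℕ // Function.Injective l} :=
  Equiv.ofBijective
    (fun p => ⟨p.1.1 ∘ p.2, p.1.2.injective.comp p.2.injective⟩) (by
    constructor
    · rintro ⟨⟨l, hl⟩, σ⟩ ⟨⟨l', hl'⟩, σ'⟩ hEq
      have h0 : l ∘ σ = l' ∘ σ' := congrArg Subtype.val hEq
      set π : Perm (Fin n) := σ' * σ⁻¹ with hπ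
      have hcomp : ∀ z, l z = l' (π z) := by
        intro z
        have := congrFun h0 (σ⁻¹ z)
        simpa [hπ] using this
      have hsm : StrictMono ⇑π := by
        intro a b hab
        have : l b < l a := hl hab
        rw [hcomp a, hcomp b] at this
        exact (hl'.lt_iff_gt).mp this
      have hπ1 : π = 1 := perm_strictMono_eq_one π hsm
      have hσ : σ' = σ := by
        have := congrArg (· * σ) hπ1
        simpa [hπ, mul_assoc] using this
      have hll : l = l' := by
        funext z
        rw [hcomp z, hπ1]; rfl
      subst hσ; subst hll; rfl
    · rintro ⟨f, hf⟩
      set σ₀ := Tuple.sort f with hσ₀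
      have hsm : StrictMono (f ∘ σ₀) :=
        (Tuple.monotone_sort f).strictMono_of_injective (hf.comp σ₀.injective)
      set e : Perm (Fin n) := Fin.revPerm.trans σ₀ with he
      refine ⟨⟨⟨fun i => f (σ₀ (Fin.rev i)), ?_⟩, e⁻¹⟩, ?_⟩
      · intro a b hab
        exact hsm (Fin.rev_lt_rev.mpr hab)
      · apply Subtype.ext
        funext z
        show f (σ₀ (Fin.rev (e⁻¹ z))) = f z
        have : σ₀ (Fin.rev (e⁻¹ z)) = e (e.symm z) := rfl
        rw [this, Equiv.apply_symm_apply])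

lemma Dd_w {n : ℕ} (x : Fin n → ℂ) :
    Dd x (fun i => n - 1 - (i : ℕ))
      = ((Perm.sign (Fin.revPerm : Perm (Fin n)) : ℤ) : ℂ) * (Matrix.vandermonde x).det := by
  have hM : (Matrix.of fun i j : Fin n => x j ^ (n - 1 - (i : ℕ)))
      = ((Matrix.vandermonde x)ᵀ).submatrix Fin.revPerm id := by
    ext i j
    simp only [Matrix.of_apply, Matrix.submatrix_apply, Matrix.transpose_apply,
      Matrix.vandermonde_apply, id_eq, Fin.revPerm_apply, Fin.val_rev]
    congr 1
    omega
  rw [Dd, hM, Matrix.det_permute, Matrix.det_transpose]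

lemma Dd_w_ne_zero {n : ℕ} (x : Fin n → ℂ) (hx : Function.Injective x) :
    Dd x (fun i => n - 1 - (i : ℕ)) ≠ 0 := by
  rw [Dd_w]
  refine mul_ne_zero ?_ (Matrix.det_vandermonde_ne_zero_iff.mpr hx)
  rcases Int.units_eq_one_or (Perm.sign (Fin.revPerm : Perm (Fin n))) with h | h <;>
    rw [h] <;> norm_num

lemma Dd_w_mul {n : ℕ} (x y : Fin n → ℂ) :
    Dd x (fun i => n - 1 - (i : ℕ)) * Dd y (fun i => n - 1 - (i : ℕ))
      = (Matrix.vandermonde x).det * (Matrix.vandermonde y).det := by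
  rw [Dd_w, Dd_w]
  rcases Int.units_eq_one_or (Perm.sign (Fin.revPerm : Perm (Fin n))) with h | h <;>
    rw [h] <;> push_cast <;> ring









lemma antitone_snoc {k : ℕ} (m : Fin k → ℕ) (hm : Antitone m) :
    Antitone (Fin.snoc m 0 : Fin (k+1) → ℕ) := by
  intro i j hij
  rcases eq_or_ne j (Fin.last k) with rfl | hj
  · rw [Fin.snoc_last]; exact Nat.zero_le _
  · have hi : i ≠ Fin.last k := by
      intro h
      exact hj (le_antisymm (Fin.le_last j) (h ▸ hij))
    rw [← Fin.castSucc_castPred j hj, ← Fin.castSucc_castPred i hi,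
      Fin.snoc_castSucc, Fin.snoc_castSucc]
    apply hm
    rw [Fin.le_def]
    simpa using hij

noncomputable def partitionEquiv (k : ℕ) :
    ({m : Fin k → ℕ // Antitone m} × ℕ) ≃ {l : Fin (k+1) → ℕ // StrictAnti l} :=
  Equiv.ofBijective
    (fun p => ⟨fun i => (Fin.snoc p.1.1 0 : Fin (k+1) → ℕ) i + p.2 + (k - (i : ℕ)), by
      intro a b hab
      show (Fin.snoc p.1.1 0 : Fin (k+1) → ℕ) b + p.2 + (k - (b:ℕ))
        < (Fin.snoc p.1.1 0 : Fin (k+1) → ℕ) a + p.2 + (k - (a:ℕ))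
      have h1 : (Fin.snoc p.1.1 0 : Fin (k+1) → ℕ) b ≤ (Fin.snoc p.1.1 0 : Fin (k+1) → ℕ) a :=
        antitone_snoc _ p.1.2 (le_of_lt hab)
      have h2 : (b : ℕ) ≤ k := Nat.lt_succ_iff.mp b.isLt
      have h3 : (a : ℕ) < (b : ℕ) := hab
      omega⟩)
    (by
      constructor
      · rintro ⟨⟨m, hm⟩, c⟩ ⟨⟨m', hm'⟩, c'⟩ hEq
        have h0' : (fun i : Fin (k+1) => (Fin.snoc m 0 : Fin (k+1) → ℕ) i + c + (k - (i:ℕ)))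
            = (fun i : Fin (k+1) => (Fin.snoc m' 0 : Fin (k+1) → ℕ) i + c' + (k - (i:ℕ))) :=
          congrArg Subtype.val hEq
        have h0 : ∀ i : Fin (k+1),
            (Fin.snoc m 0 : Fin (k+1) → ℕ) i + c + (k - (i:ℕ))
              = (Fin.snoc m' 0 : Fin (k+1) → ℕ) i + c' + (k - (i:ℕ)) :=
          fun i => congrFun h0' i
        have hc : c = c' := by
          have := h0 (Fin.last k)
          simpa [Fin.snoc_last] using this
        have hmm : m = m' := by
          funext i
          have := h0 (Fin.castSucc i)
          rw [Fin.snoc_castSucc, Fin.snoc_castSucc] at this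
          omega
        subst hc; subst hmm; rfl
      · rintro ⟨l, hl⟩
        have hgap : ∀ i : Fin k, l (Fin.last k) + (k - (i : ℕ)) ≤ l (Fin.castSucc i) := by
          intro i
          refine strictAnti_gap l hl (k - (i : ℕ)) (Fin.castSucc i) (Fin.last k) ?_
          have : (i : ℕ) ≤ k := le_of_lt i.isLt
          simp only [Fin.coe_castSucc, Fin.val_last]
          omega
        refine ⟨⟨⟨fun i => l (Fin.castSucc i) - l (Fin.last k) - (k - (i : ℕ)), ?_⟩,
          l (Fin.last k)⟩, ?_⟩
        · intro a b hab2
          show l (Fin.castSucc b) - l (Fin.last k) - (k - (b:ℕ))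
            ≤ l (Fin.castSucc a) - l (Fin.last k) - (k - (a:ℕ))
          have hbk : (b:ℕ) < k := b.isLt
          have hg := strictAnti_gap l hl ((b:ℕ) - (a:ℕ)) (Fin.castSucc a) (Fin.castSucc b) (by
            simp only [Fin.coe_castSucc]
            have : (a:ℕ) ≤ (b:ℕ) := hab2
            omega)
          have h1 := hgap a
          have h2 := hgap b
          have h3 : (a:ℕ) ≤ (b:ℕ) := hab2
          omega
        · apply Subtype.ext
          funext i
          show (Fin.snoc (fun i : Fin k => l (Fin.castSucc i) - l (Fin.last k) - (k - (i:ℕ))) 0 :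
              Fin (k+1) → ℕ) i + l (Fin.last k) + (k - (i:ℕ)) = l i
          rcases eq_or_ne i (Fin.last k) with rfl | hi
          · simp [Fin.snoc_last, Fin.val_last]
          · rw [← Fin.castSucc_castPred i hi, Fin.snoc_castSucc]
            have h4 := hgap (i.castPred hi)
            simp only [Fin.castSucc_castPred] at h4 ⊢
            have hval : ((i.castPred hi : Fin k) : ℕ) = (i : ℕ) := rfl
            rw [hval] at h4 ⊢
            omega)

lemma abs_Dd_le {n : ℕ} (x : Fin n → ℂ) (l : Fin n → ℕ) (X : ℝ) (hX0 : 0 ≤ X)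
    (hX : ∀ i, ‖x i‖ ≤ X) :
    ‖Dd x l‖ ≤ (Nat.factorial n : ℝ) * X ^ (∑ i, l i) := by
  rw [Dd_apply]
  refine le_trans (norm_sum_le _ _) ?_
  have hterm : ∀ σ : Perm (Fin n),
      ‖((Perm.sign σ : ℤ) : ℂ) * ∏ i, x i ^ l (σ i)‖ ≤ X ^ (∑ i, l i) := by
    intro σ
    rw [norm_mul]
    have hsgn : ‖((Perm.sign σ : ℤ) : ℂ)‖ = 1 := by
      rcases Int.units_eq_one_or (Perm.sign σ) with h | h <;> rw [h] <;> norm_num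
    rw [hsgn, one_mul, norm_prod]
    have : ∀ i : Fin n, ‖x i ^ l (σ i)‖ ≤ X ^ (l (σ i)) := by
      intro i
      rw [norm_pow]
      exact pow_le_pow_left₀ (norm_nonneg _) (hX i) _
    refine le_trans (Finset.prod_le_prod (fun i _ => by positivity) (fun i _ => this i)) ?_
    rw [Finset.prod_pow_eq_pow_sum]
    rw [Equiv.sum_comp σ l]
  refine le_trans (Finset.sum_le_sum fun σ _ => hterm σ) ?_
  rw [Finset.sum_const, Finset.card_univ, Fintype.card_perm, Fintype.card_fin, nsmul_eq_mul]

lemma sortedEquiv_apply (n : ℕ) (p : {l : Fin n → ℕ // StrictAnti l} × Perm (Fin n)) :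
    ((sortedEquiv n) p).1 = p.1.1 ∘ p.2 := rfl

lemma partitionEquiv_apply (k : ℕ) (p : {m : Fin k → ℕ // Antitone m} × ℕ) :
    ((partitionEquiv k) p).1
      = fun i => (Fin.snoc p.1.1 0 : Fin (k+1) → ℕ) i + p.2 + (k - (i : ℕ)) := rfl



/-- The Schur polynomial `λ_x(m) = det([x_j^{m_i + N − i}]) / det([x_j^{N − i}])`. -/
noncomputable def schur {N : ℕ} (x : Fin N → ℂ) (m : Fin N → ℕ) : ℂ :=
  (Matrix.of fun i j : Fin N => x j ^ (m i + (N - 1 - (i : ℕ)))).det /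
  (Matrix.of fun i j : Fin N => x j ^ (N - 1 - (i : ℕ))).det

/-- For `n = k + 1 ≥ 1`, pairwise distinct `x, y ∈ ℂ^n` with `(∏ x_i)(∏ y_j) = 1`, and
`t` with `(max |x_i|)(max |y_j|)|t| < 1`, the family
`λ_x(m₁,…,m_{n−1},0) λ_y(m₁,…,m_{n−1},0) t^{m₁+⋯+m_{n−1}}` over weakly decreasing
`m ∈ ℕ^{n−1}` is absolutely summable with sum `(1 − tⁿ) ∏_{i,j}(1 − x_i y_j t)⁻¹`. -/
theorem cauchy_identity_trivial_central_character (k : ℕ) (x y : Fin (k + 1) → ℂ)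
    (hx : Function.Injective x) (hy : Function.Injective y)
    (hprod : (∏ i, x i) * (∏ j, y j) = 1) (t : ℂ)
    (ht : (Finset.univ.sup' ⟨0, Finset.mem_univ _⟩ fun i => ‖x i‖) *
          (Finset.univ.sup' ⟨0, Finset.mem_univ _⟩ fun j => ‖y j‖) *
          ‖t‖ < 1) :
    Summable (fun m : {m : Fin k → ℕ // Antitone m} =>
      ‖schur x (Fin.snoc m.1 0) * schur y (Fin.snoc m.1 0) *
        t ^ (∑ i, m.1 i)‖) ∧
    ∑' m : {m : Fin k → ℕ // Antitone m},
        schur x (Fin.snoc m.1 0) * schur y (Fin.snoc m.1 0) * t ^ (∑ i, m.1 i)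
      = (1 - t ^ (k + 1)) * ∏ i : Fin (k + 1), ∏ j : Fin (k + 1), (1 - x i * y j * t)⁻¹ := by
  classical
  -- the two Vandermonde-type determinants are nonzero
  have hVx : Dd x (fun i : Fin (k+1) => k + 1 - 1 - (i : ℕ)) ≠ 0 := Dd_w_ne_zero x hx
  have hVy : Dd y (fun i : Fin (k+1) => k + 1 - 1 - (i : ℕ)) ≠ 0 := Dd_w_ne_zero y hy
  have hschur : ∀ (z : Fin (k+1) → ℂ) (M : Fin (k+1) → ℕ),
      Dd z (fun i : Fin (k+1) => k + 1 - 1 - (i : ℕ)) ≠ 0 →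
      Dd z (fun i => M i + (k + 1 - 1 - (i : ℕ)))
        = schur z M * Dd z (fun i : Fin (k+1) => k + 1 - 1 - (i : ℕ)) := by
    intro z M hz
    have hdef : schur z M
        = Dd z (fun i => M i + (k + 1 - 1 - (i : ℕ)))
          / Dd z (fun i : Fin (k+1) => k + 1 - 1 - (i : ℕ)) := rfl
    rw [hdef, div_mul_cancel₀ _ hz]
  by_cases ht0 : t = 0
  · -- degenerate case t = 0
    subst ht0
    set m₀ : {m : Fin k → ℕ // Antitone m} := ⟨fun _ => 0, fun _ _ _ => le_refl 0⟩ with hm₀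
    have hvanish : ∀ m : {m : Fin k → ℕ // Antitone m}, m ≠ m₀ →
        schur x (Fin.snoc m.1 0) * schur y (Fin.snoc m.1 0) * (0:ℂ) ^ (∑ i, m.1 i) = 0 := by
      intro m hm
      have hsum : ∑ i, m.1 i ≠ 0 := by
        intro hsum
        apply hm
        apply Subtype.ext
        funext i
        exact Finset.sum_eq_zero_iff.mp hsum i (mem_univ i)
      rw [zero_pow hsum, mul_zero]
    have hsnoc0 : (Fin.snoc (fun _ : Fin k => 0) 0 : Fin (k+1) → ℕ) = fun _ => 0 := by
      funext i
      refine Fin.lastCases ?_ ?_ i <;> simp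
    have hone : ∀ (z : Fin (k+1) → ℂ), Function.Injective z →
        schur z (fun _ => 0) = 1 := by
      intro z hz
      have hdef : schur z (fun _ => 0)
          = Dd z (fun i => 0 + (k + 1 - 1 - (i : ℕ)))
            / Dd z (fun i : Fin (k+1) => k + 1 - 1 - (i : ℕ)) := rfl
      rw [hdef]
      simp only [zero_add]
      exact div_self (Dd_w_ne_zero z hz)
    have hterm₀ : schur x (Fin.snoc m₀.1 0) * schur y (Fin.snoc m₀.1 0)
        * (0:ℂ) ^ (∑ i, m₀.1 i) = 1 := by
      have h1 : (Fin.snoc m₀.1 0 : Fin (k+1) → ℕ) = fun _ => 0 := hsnoc0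
      rw [h1, hone x hx, hone y hy]
      simp [hm₀]
    constructor
    · apply summable_of_ne_finset_zero (s := {m₀})
      intro m hm
      rw [hvanish m (by simpa using hm)]
      simp
    · rw [tsum_eq_single m₀ hvanish, hterm₀]
      have : (0:ℂ) ^ (k+1) = 0 := zero_pow (Nat.succ_ne_zero k)
      rw [this]
      simp
  · -- main case  t ≠ 0
    -- main case t ≠ 0
    set X : ℝ := Finset.univ.sup' ⟨0, Finset.mem_univ _⟩ (fun i => ‖x i‖) with hXdef
    set Y : ℝ := Finset.univ.sup' ⟨0, Finset.mem_univ _⟩ (fun j => ‖y j‖) with hYdef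
    have hXx : ∀ i, ‖x i‖ ≤ X := fun i => by
      rw [hXdef]; exact Finset.le_sup' (fun i => ‖x i‖) (mem_univ i)
    have hYy : ∀ j, ‖y j‖ ≤ Y := fun j => by
      rw [hYdef]; exact Finset.le_sup' (fun j => ‖y j‖) (mem_univ j)
    have hX0 : 0 ≤ X := le_trans (norm_nonneg _) (hXx 0)
    have hY0 : 0 ≤ Y := le_trans (norm_nonneg _) (hYy 0)
    set r : ℝ := X * Y * ‖t‖ with hrdef
    have hr1 : r < 1 := ht
    have hr0 : 0 ≤ r := by positivity
    have habs : ∀ i j, ‖x i * y j * t‖ ≤ r := by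
      intro i j
      rw [norm_mul, norm_mul]
      exact mul_le_mul_of_nonneg_right
        (mul_le_mul (hXx i) (hYy j) (norm_nonneg _) hX0) (norm_nonneg t)
    have hP : ∀ i j, (1:ℂ) - x i * y j * t ≠ 0 := by
      intro i j h
      have h1 : x i * y j * t = 1 := by
        have := sub_eq_zero.mp h
        exact this.symm
      have h2 := habs i j
      rw [h1] at h2
      simp only [norm_one] at h2
      linarith
    have hprody : (∏ j, y j) ≠ 0 := by
      intro h; rw [h, mul_zero] at hprod; exact one_ne_zero hprod.symm
    have hy0 : ∀ j, y j ≠ 0 := fun j => Finset.prod_ne_zero_iff.mp hprody j (mem_univ j)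
    have hXY1 : 1 ≤ X * Y := by
      have h1 : ‖∏ i, x i‖ ≤ X ^ (k+1) := by
        rw [norm_prod]
        refine le_trans (Finset.prod_le_prod (fun i _ => norm_nonneg _)
          (fun i _ => hXx i)) ?_
        rw [Finset.prod_const, card_univ, Fintype.card_fin]
      have h2 : ‖∏ j, y j‖ ≤ Y ^ (k+1) := by
        rw [norm_prod]
        refine le_trans (Finset.prod_le_prod (fun i _ => norm_nonneg _)
          (fun i _ => hYy i)) ?_
        rw [Finset.prod_const, card_univ, Fintype.card_fin]
      have h3 : (1:ℝ) ≤ (X*Y)^(k+1) := by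
        have h4 : ‖(∏ i, x i) * (∏ j, y j)‖ = 1 := by rw [hprod]; simp
        rw [norm_mul] at h4
        calc (1:ℝ) = ‖∏ i, x i‖ * ‖∏ j, y j‖ := h4.symm
          _ ≤ X^(k+1) * Y^(k+1) :=
              mul_le_mul h1 h2 (norm_nonneg _) (pow_nonneg hX0 _)
          _ = (X*Y)^(k+1) := (mul_pow _ _ _).symm
      by_contra hcon
      push_neg at hcon
      have h5 : (X*Y)^(k+1) < 1^(k+1) :=
        pow_lt_pow_left₀ hcon (by positivity) (Nat.succ_ne_zero k)
      simp only [one_pow] at h5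
      linarith
    have ht1 : ‖t‖ < 1 := by
      have h6 : ‖t‖ ≤ r := by
        rw [hrdef]
        nlinarith [norm_nonneg t]
      linarith
    have htk : ‖t ^ (k+1)‖ < 1 := by
      rw [norm_pow]
      exact pow_lt_one₀ (norm_nonneg t) ht1 (Nat.succ_ne_zero k)
    have hz1 : (1:ℂ) - t ^ (k+1) ≠ 0 := by
      intro h
      have h7 : t^(k+1) = 1 := (sub_eq_zero.mp h).symm
      rw [h7] at htk
      simp at htk
    -- the master family F on all tuples
    set F : (Fin (k+1) → ℕ) → ℂ := fun l => Dd x l * Dd y l * t ^ (∑ i, l i) with hFdef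
    have hg1 : Summable (fun m : ℕ => r ^ m) := summable_geometric_of_lt_one hr0 hr1
    have hnormgeo : Summable (fun m : ℕ => ‖r ^ m‖) := by
      simpa [Real.norm_eq_abs, abs_of_nonneg (pow_nonneg hr0 _)] using hg1
    have hpigeo := pi_tsum (R := ℝ) (k+1) (fun _ m => r ^ m) (fun _ => hnormgeo)
    have hgeo : Summable (fun l : Fin (k+1) → ℕ => r ^ (∑ i, l i)) := by
      refine hpigeo.1.congr fun l => ?_
      rw [Real.norm_eq_abs, abs_of_nonneg (Finset.prod_nonneg fun i _ => pow_nonneg hr0 _),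
        Finset.prod_pow_eq_pow_sum]
    have hFs : Summable (fun l : Fin (k+1) → ℕ => ‖F l‖) := by
      have hC : Summable (fun l : Fin (k+1) → ℕ =>
          ((Nat.factorial (k+1) : ℝ) * (Nat.factorial (k+1) : ℝ)) * r ^ (∑ i, l i)) :=
        hgeo.mul_left _
      refine Summable.of_nonneg_of_le (fun l => norm_nonneg _) (fun l => ?_) hC
      rw [hFdef]
      simp only []
      rw [norm_mul, norm_mul, norm_pow]
      calc ‖Dd x l‖ * ‖Dd y l‖ * ‖t‖ ^ (∑ i, l i)
          ≤ (((Nat.factorial (k+1) : ℝ) * X ^ (∑ i, l i))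
            * ((Nat.factorial (k+1) : ℝ) * Y ^ (∑ i, l i))) * ‖t‖ ^ (∑ i, l i) := by
            refine mul_le_mul_of_nonneg_right ?_ (pow_nonneg (norm_nonneg _) _)
            exact mul_le_mul (abs_Dd_le x l X hX0 hXx) (abs_Dd_le y l Y hY0 hYy)
              (norm_nonneg _) (by positivity)
        _ = ((Nat.factorial (k+1) : ℝ) * (Nat.factorial (k+1) : ℝ)) * r ^ (∑ i, l i) := by
            rw [hrdef, mul_pow, mul_pow]; ring
    -- expansion of F over pairs of permutations
    have hFG : ∀ l : Fin (k+1) → ℕ, F l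
        = ∑ p : Perm (Fin (k+1)) × Perm (Fin (k+1)),
            ((Perm.sign p.1 : ℤ) : ℂ) * ((Perm.sign p.2 : ℤ) : ℂ)
              * ∏ i, (x (p.1⁻¹ i) * y (p.2⁻¹ i) * t) ^ (l i) := by
      intro l
      have hre : ∀ (z : Fin (k+1) → ℂ) (σ : Perm (Fin (k+1))),
          (∏ i, z i ^ l (σ i)) = ∏ i, z (σ⁻¹ i) ^ l i := by
        intro z σ
        rw [← Equiv.prod_comp σ (fun i => z (σ⁻¹ i) ^ l i)]
        exact Finset.prod_congr rfl fun i _ => by simp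
      rw [hFdef]
      simp only []
      rw [Dd_apply, Dd_apply, Finset.sum_mul_sum, Fintype.sum_prod_type, Finset.sum_mul]
      refine Finset.sum_congr rfl fun σ _ => ?_
      rw [Finset.sum_mul]
      refine Finset.sum_congr rfl fun τ _ => ?_
      rw [hre x σ, hre y τ]
      have hprodsplit : ∏ i, (x (σ⁻¹ i) * y (τ⁻¹ i) * t) ^ (l i)
          = (∏ i, x (σ⁻¹ i) ^ l i) * (∏ i, y (τ⁻¹ i) ^ l i) * (t ^ (∑ i, l i)) := by
        rw [← Finset.prod_pow_eq_pow_sum, ← Finset.prod_mul_distrib, ← Finset.prod_mul_distrib]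
        exact Finset.prod_congr rfl fun i _ => by rw [mul_pow, mul_pow]
      rw [hprodsplit]
      ring
    -- tsum of each term
    have hGsummable : ∀ p : Perm (Fin (k+1)) × Perm (Fin (k+1)),
        Summable (fun l : Fin (k+1) → ℕ => ‖∏ i, (x (p.1⁻¹ i) * y (p.2⁻¹ i) * t) ^ (l i)‖)
          ∧ ∑' l : Fin (k+1) → ℕ, ∏ i, (x (p.1⁻¹ i) * y (p.2⁻¹ i) * t) ^ (l i)
              = ∏ i, (1 - x (p.1⁻¹ i) * y (p.2⁻¹ i) * t)⁻¹ := by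
      intro p
      have hlt : ∀ i : Fin (k+1), ‖x (p.1⁻¹ i) * y (p.2⁻¹ i) * t‖ < 1 := fun i =>
        lt_of_le_of_lt (by exact habs _ _) hr1
      obtain ⟨hs, hteq⟩ := pi_tsum (k+1) (fun i m => (x (p.1⁻¹ i) * y (p.2⁻¹ i) * t) ^ m)
        (fun i => (summable_geometric_of_lt_one (norm_nonneg _) (hlt i)).congr
          (fun m => (norm_pow _ _).symm))
      exact ⟨hs, hteq.trans (Finset.prod_congr rfl fun i _ =>
        tsum_geometric_of_norm_lt_one (hlt i))⟩
    have hGsum : ∀ p : Perm (Fin (k+1)) × Perm (Fin (k+1)),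
        Summable (fun l : Fin (k+1) → ℕ =>
          ((Perm.sign p.1 : ℤ) : ℂ) * ((Perm.sign p.2 : ℤ) : ℂ)
            * ∏ i, (x (p.1⁻¹ i) * y (p.2⁻¹ i) * t) ^ (l i)) :=
      fun p => ((hGsummable p).1.of_norm).mul_left _
    have htotal : ∑' l : Fin (k+1) → ℕ, F l
        = ∑ p : Perm (Fin (k+1)) × Perm (Fin (k+1)),
            ((Perm.sign p.1 : ℤ) : ℂ) * ((Perm.sign p.2 : ℤ) : ℂ)
              * ∏ i, (1 - x (p.1⁻¹ i) * y (p.2⁻¹ i) * t)⁻¹ := by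
      rw [tsum_congr hFG, Summable.tsum_finsetSum (fun p _ => hGsum p)]
      refine Finset.sum_congr rfl fun p _ => ?_
      rw [tsum_mul_left, (hGsummable p).2]
    -- the Cauchy-type matrix
    set Cm : Matrix (Fin (k+1)) (Fin (k+1)) ℂ :=
      Matrix.of (fun i j : Fin (k+1) => (1 - x j * y i * t)⁻¹) with hCm
    have hD0 : ∑ τ : Perm (Fin (k+1)), ((Perm.sign τ : ℤ) : ℂ)
        * ∏ j, (1 - x j * y (τ j) * t)⁻¹ = Cm.det := by
      rw [Matrix.det_apply']
      rfl
    have hswap : ∑ p : Perm (Fin (k+1)) × Perm (Fin (k+1)),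
        ((Perm.sign p.1 : ℤ) : ℂ) * ((Perm.sign p.2 : ℤ) : ℂ)
          * ∏ i, (1 - x (p.1⁻¹ i) * y (p.2⁻¹ i) * t)⁻¹
      = (Fintype.card (Perm (Fin (k+1))) : ℂ) * Cm.det := by
      rw [Fintype.sum_prod_type]
      have step1 : ∀ σ : Perm (Fin (k+1)), ∑ τ : Perm (Fin (k+1)),
          ((Perm.sign σ : ℤ) : ℂ) * ((Perm.sign τ : ℤ) : ℂ)
            * ∏ i, (1 - x (σ⁻¹ i) * y (τ⁻¹ i) * t)⁻¹ = Cm.det := by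
        intro σ
        have hsq : ((Perm.sign σ : ℤ) : ℂ) * ((Perm.sign σ : ℤ) : ℂ) = 1 := by
          rcases Int.units_eq_one_or (Perm.sign σ) with h|h <;> rw [h] <;> norm_num
        set φ : Perm (Fin (k+1)) ≃ Perm (Fin (k+1)) :=
          (Equiv.inv (Perm (Fin (k+1)))).trans (Equiv.mulLeft σ) with hφ
        rw [← Equiv.sum_comp φ (fun τ => ((Perm.sign σ : ℤ) : ℂ) * ((Perm.sign τ : ℤ) : ℂ)
          * ∏ i, (1 - x (σ⁻¹ i) * y (τ⁻¹ i) * t)⁻¹)]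
        rw [← hD0]
        refine Finset.sum_congr rfl fun ρ _ => ?_
        have hφval : φ ρ = σ * ρ⁻¹ := rfl
        rw [hφval]
        have hsign : ((Perm.sign (σ * ρ⁻¹) : ℤ) : ℂ)
            = ((Perm.sign σ : ℤ) : ℂ) * ((Perm.sign ρ : ℤ) : ℂ) := by
          rw [Equiv.Perm.sign_mul, Equiv.Perm.sign_inv]
          push_cast
          ring
        rw [hsign]
        have hxinv : ∀ i : Fin (k+1), (σ * ρ⁻¹ : Perm (Fin (k+1)))⁻¹ i = ρ (σ⁻¹ i) := by
          intro i
          simp [_root_.mul_inv_rev, Equiv.Perm.mul_apply]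
        have hprodre : ∏ i, (1 - x (σ⁻¹ i) * y ((σ * ρ⁻¹ : Perm (Fin (k+1)))⁻¹ i) * t)⁻¹
            = ∏ j, (1 - x j * y (ρ j) * t)⁻¹ := by
          rw [← Equiv.prod_comp (σ⁻¹ : Perm (Fin (k+1)))
            (fun j => (1 - x j * y (ρ j) * t)⁻¹)]
          exact Finset.prod_congr rfl fun i _ => by rw [hxinv i]
        rw [hprodre]
        rw [show ((Perm.sign σ : ℤ) : ℂ) * (((Perm.sign σ : ℤ) : ℂ) * ((Perm.sign ρ : ℤ) : ℂ))
          = ((Perm.sign ρ : ℤ) : ℂ) by rw [← mul_assoc, hsq, one_mul]]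
      calc ∑ σ : Perm (Fin (k+1)), ∑ τ : Perm (Fin (k+1)),
            ((Perm.sign σ : ℤ) : ℂ) * ((Perm.sign τ : ℤ) : ℂ)
              * ∏ i, (1 - x (σ⁻¹ i) * y (τ⁻¹ i) * t)⁻¹
          = ∑ _σ : Perm (Fin (k+1)), Cm.det := Finset.sum_congr rfl (fun σ _ => step1 σ)
        _ = (Fintype.card (Perm (Fin (k+1))) : ℂ) * Cm.det := by
            rw [Finset.sum_const, card_univ, nsmul_eq_mul]
    -- restriction to injective tuples, then to sorted tuples
    have hFsupp : Function.support F ⊆ {l : Fin (k+1) → ℕ | Function.Injective l} := by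
      intro l hl
      by_contra hinj
      apply hl
      rw [hFdef]
      simp only []
      rw [Dd_zero x l hinj, zero_mul, zero_mul]
    have hinjsum : ∑' l : {l : Fin (k+1) → ℕ // Function.Injective l}, F l.1 = ∑' l, F l :=
      tsum_subtype_eq_of_support_subset hFsupp
    have hFsummable : Summable F := hFs.of_norm
    have hIs : Summable (fun l : {l : Fin (k+1) → ℕ // Function.Injective l} => F l.1) :=
      (hFsummable.subtype _).congr (fun l => rfl)
    have hps : ∀ p : {l : Fin (k+1) → ℕ // StrictAnti l} × Perm (Fin (k+1)),
        F ((sortedEquiv (k+1)) p).1 = F p.1.1 := by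
      intro p
      rw [sortedEquiv_apply]
      rw [hFdef]
      simp only []
      rw [Dd_comp, Dd_comp]
      have hsum2 : ∑ i, (p.1.1 ∘ p.2) i = ∑ i, p.1.1 i := Equiv.sum_comp p.2 p.1.1
      rw [hsum2]
      have hsq : ((Perm.sign p.2 : ℤ) : ℂ) * ((Perm.sign p.2 : ℤ) : ℂ) = 1 := by
        rcases Int.units_eq_one_or (Perm.sign p.2) with h|h <;> rw [h] <;> norm_num
      linear_combination (Dd x p.1.1 * Dd y p.1.1 * t ^ (∑ i, p.1.1 i)) * hsq
    have hPsum : Summable (fun p : {l : Fin (k+1) → ℕ // StrictAnti l} × Perm (Fin (k+1)) =>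
        F p.1.1) := (((Equiv.summable_iff (sortedEquiv (k+1))).mpr hIs).congr hps)
    have hsorted_eq : (Fintype.card (Perm (Fin (k+1))) : ℂ)
        * ∑' l : {l : Fin (k+1) → ℕ // StrictAnti l}, F l.1 = ∑' l, F l := by
      rw [← hinjsum, ← Equiv.tsum_eq (sortedEquiv (k+1)) (fun l => F l.1)]
      rw [tsum_congr hps]
      rw [Summable.tsum_prod' hPsum (fun b => Summable.of_finite)]
      have hper : ∀ l' : {l : Fin (k+1) → ℕ // StrictAnti l},
          ∑' _ : Perm (Fin (k+1)), F l'.1 = (Fintype.card (Perm (Fin (k+1))) : ℂ) * F l'.1 := by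
        intro l'
        rw [tsum_fintype, Finset.sum_const, card_univ, nsmul_eq_mul]
      rw [tsum_congr hper, tsum_mul_left]
    have hKEY1 : ∑' l : {l : Fin (k+1) → ℕ // StrictAnti l}, F l.1 = Cm.det := by
      have h8 : (Fintype.card (Perm (Fin (k+1))) : ℂ)
          * ∑' l : {l : Fin (k+1) → ℕ // StrictAnti l}, F l.1
          = (Fintype.card (Perm (Fin (k+1))) : ℂ) * Cm.det := by
        rw [hsorted_eq, htotal, hswap]
      exact mul_left_cancel₀ (Nat.cast_ne_zero.mpr Fintype.card_ne_zero) h8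
    -- partition side
    set Vx : ℂ := Dd x (fun i : Fin (k+1) => k + 1 - 1 - (i : ℕ)) with hVxdef
    set Vy : ℂ := Dd y (fun i : Fin (k+1) => k + 1 - 1 - (i : ℕ)) with hVydef
    set E : ℕ := ∑ i : Fin (k+1), (k + 1 - 1 - (i : ℕ)) with hEdef
    set V : ℂ := Vx * Vy * t ^ E with hVdef
    have hVne : V ≠ 0 := mul_ne_zero (mul_ne_zero hVx hVy) (pow_ne_zero _ ht0)
    set G : {m : Fin k → ℕ // Antitone m} → ℂ :=
      fun m => schur x (Fin.snoc m.1 0) * schur y (Fin.snoc m.1 0) * t ^ (∑ i, m.1 i)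
      with hGdef
    have hterm : ∀ (m : {m : Fin k → ℕ // Antitone m}) (c : ℕ),
        F ((partitionEquiv k) (m, c)).1 = G m * (V * (t ^ (k+1)) ^ c) := by
      intro m c
      have hl : ((partitionEquiv k) (m, c)).1
          = fun i => ((Fin.snoc m.1 0 : Fin (k+1) → ℕ) i + (k + 1 - 1 - (i : ℕ))) + c := by
        rw [partitionEquiv_apply]
        funext i
        show (Fin.snoc m.1 0 : Fin (k+1) → ℕ) i + c + (k - (i:ℕ))
          = (Fin.snoc m.1 0 : Fin (k+1) → ℕ) i + (k + 1 - 1 - (i : ℕ)) + c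
        have hik : (i : ℕ) ≤ k := Nat.lt_succ_iff.mp i.isLt
        omega
      rw [hl, hFdef]
      simp only []
      rw [Dd_add_const, Dd_add_const]
      rw [hschur x _ hVx, hschur y _ hVy]
      have hsum3 : ∑ i : Fin (k+1), ((Fin.snoc m.1 0 : Fin (k+1) → ℕ) i + (k + 1 - 1 - (i : ℕ)) + c)
          = (∑ i, m.1 i) + E + (k+1) * c := by
        rw [Finset.sum_add_distrib, Finset.sum_add_distrib]
        congr 1
        · congr 1
          · rw [Fin.sum_univ_castSucc]
            simp
        · rw [Finset.sum_const, card_univ, Fintype.card_fin, smul_eq_mul]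
      rw [hsum3]
      have hc1 : (∏ j, x j) ^ c * (∏ j, y j) ^ c = 1 := by
        rw [← mul_pow, hprod, one_pow]
      have hexp : t ^ ((∑ i, m.1 i) + E + (k+1) * c)
          = t ^ (∑ i, m.1 i) * t ^ E * (t ^ (k+1)) ^ c := by
        rw [pow_add, pow_add, pow_mul]
      rw [hexp]
      simp only [hGdef, hVdef]
      linear_combination (schur x (Fin.snoc m.1 0) * schur y (Fin.snoc m.1 0)
        * t ^ (∑ i, m.1 i) * (Vx * Vy * t ^ E * (t ^ (k+1)) ^ c)) * hc1
    have hsortN : Summable (fun l : {l : Fin (k+1) → ℕ // StrictAnti l} => ‖F l.1‖) :=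
      (hFs.subtype _).congr (fun l => rfl)
    have hprodN : Summable (fun p : {m : Fin k → ℕ // Antitone m} × ℕ =>
        ‖F ((partitionEquiv k) p).1‖) :=
      ((Equiv.summable_iff (partitionEquiv k)).mpr hsortN).congr (fun p => rfl)
    have hGn : Summable (fun m : {m : Fin k → ℕ // Antitone m} => ‖G m‖) := by
      have hinj0 : Function.Injective
          (fun m : {m : Fin k → ℕ // Antitone m} => ((m, 0) : {m : Fin k → ℕ // Antitone m} × ℕ)) :=
        fun a b h => (Prod.ext_iff.mp h).1
      have h1 : Summable (fun m : {m : Fin k → ℕ // Antitone m} =>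
          ‖F ((partitionEquiv k) (m, 0)).1‖) := hprodN.comp_injective hinj0
      have h2 : ∀ m : {m : Fin k → ℕ // Antitone m},
          ‖F ((partitionEquiv k) (m, 0)).1‖ = ‖G m‖ * ‖V‖ := by
        intro m
        rw [hterm m 0, pow_zero, mul_one, norm_mul]
      refine ((h1.mul_right ‖V‖⁻¹).congr fun m => ?_)
      rw [h2 m, mul_assoc, mul_inv_cancel₀ (norm_ne_zero_iff.mpr hVne), mul_one]
    have hinnerS : ∀ m : {m : Fin k → ℕ // Antitone m},
        Summable (fun c : ℕ => F ((partitionEquiv k) (m, c)).1) := by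
      intro m
      have hgeoC : Summable (fun c : ℕ => (t ^ (k+1)) ^ c) :=
        summable_geometric_of_norm_lt_one (by exact htk)
      exact ((hgeoC.mul_left (G m * V)).congr fun c => by rw [mul_assoc, ← hterm m c])
    have hEQ : (∑' m : {m : Fin k → ℕ // Antitone m}, G m) * (V * (1 - t ^ (k+1))⁻¹)
        = Cm.det := by
      have hPsum2 : Summable (fun p : {m : Fin k → ℕ // Antitone m} × ℕ =>
          F ((partitionEquiv k) p).1) :=
        ((Equiv.summable_iff (partitionEquiv k)).mpr ((hFs.of_norm).subtype _)).congr
          (fun p => rfl)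
      rw [← hKEY1, ← Equiv.tsum_eq (partitionEquiv k) (fun l => F l.1)]
      rw [Summable.tsum_prod' hPsum2 hinnerS]
      have hinner : ∀ m : {m : Fin k → ℕ // Antitone m},
          ∑' c : ℕ, F ((partitionEquiv k) (m, c)).1 = G m * (V * (1 - t ^ (k+1))⁻¹) := by
        intro m
        rw [tsum_congr (fun c => hterm m c)]
        rw [tsum_congr (fun c => (mul_assoc (G m) V ((t ^ (k+1)) ^ c)).symm)]
        rw [tsum_mul_left,
          tsum_geometric_of_norm_lt_one (by exact htk), mul_assoc]
      rw [tsum_congr hinner, tsum_mul_right]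
    -- finish
    have hdet : Cm.det = (Matrix.vandermonde x).det * (Matrix.vandermonde y).det
        * t ^ E * ∏ i, ∏ j, (1 - x i * y j * t)⁻¹ :=
      cauchy_det x y t ht0 hy0 hy hP
    have hVxy : Vx * Vy = (Matrix.vandermonde x).det * (Matrix.vandermonde y).det :=
      Dd_w_mul x y
    constructor
    · exact hGn
    · show ∑' m : {m : Fin k → ℕ // Antitone m}, G m
        = (1 - t ^ (k + 1)) * ∏ i : Fin (k + 1), ∏ j : Fin (k + 1), (1 - x i * y j * t)⁻¹
      have h9 : V * (1 - t ^ (k+1))⁻¹ ≠ 0 := mul_ne_zero hVne (inv_ne_zero hz1)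
      apply mul_right_cancel₀ h9
      rw [hEQ, hdet, hVdef, ← hVxy]
      have hr2 : (1 - t ^ (k + 1))
            * (∏ i : Fin (k+1), ∏ j : Fin (k+1), (1 - x i * y j * t)⁻¹)
            * (Vx * Vy * t ^ E * (1 - t ^ (k + 1))⁻¹)
          = (Vx * Vy * t ^ E * ∏ i : Fin (k+1), ∏ j : Fin (k+1), (1 - x i * y j * t)⁻¹)
            * ((1 - t ^ (k + 1)) * (1 - t ^ (k + 1))⁻¹) := by ring
      rw [hr2, mul_inv_cancel₀ hz1, mul_one]
end

section
/- Let N ≥ 2 be an integer and let x₁, …, x_N be nonzero, pairwise distinct complex numbers with ∏_{i=1}^N x_i = 1. Let m ∈ ℤ^{N−1} with m₁ ≥ m₂ ≥ … ≥ m_{N−1} ≥ 0. Then λ_x(m₁, …, m_{N−1}, 0) = Σ_{j=1}^{N} λ_{x^{(j)}}(m) · x_j^{−1} / ∏_{i ≠ j}(x_i − x_j), where x^{(j)} ∈ ℂ^{N−1} denotes the tuple x with the entry x_j omitted. -/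
open Finset Matrix

private def pairsSet (n : ℕ) : Finset (Fin n × Fin n) :=
  Finset.univ.filter (fun p => p.1 < p.2)

private lemma mem_pairsSet {n : ℕ} {p : Fin n × Fin n} : p ∈ pairsSet n ↔ p.1 < p.2 := by
  simp [pairsSet]

private lemma prod_pairs_eq {n : ℕ} (g : Fin n → Fin n → ℂ) :
    ∏ p ∈ pairsSet n, g p.1 p.2 = ∏ i, ∏ j ∈ Finset.Ioi i, g i j := by
  rw [← Finset.prod_sigma Finset.univ (fun i => Finset.Ioi i) (fun p => g p.1 p.2)]
  refine Finset.prod_nbij' (fun p => ⟨p.1, p.2⟩) (fun p => (p.1, p.2)) ?_ ?_ ?_ ?_ ?_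
  · intro p hp
    simpa [Finset.mem_sigma] using (mem_pairsSet.mp hp)
  · intro p hp
    simp only [Finset.mem_sigma, Finset.mem_Ioi] at hp
    exact mem_pairsSet.mpr hp.2
  · intro p _; rfl
  · intro p _; rfl
  · intro p _; rfl

private lemma vdet {n : ℕ} (y : Fin n → ℂ) :
    (Matrix.of fun i j : Fin n => y j ^ (n - 1 - (i : ℕ))).det
      = ∏ p ∈ pairsSet n, (y p.1 - y p.2) := by
  have h1 : (Matrix.of fun i j : Fin n => y j ^ (n - 1 - (i : ℕ)))
      = ((Matrix.vandermonde (fun i => y (Fin.rev i))).transpose).submatrix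
          Fin.revPerm Fin.revPerm := by
    ext i j
    simp only [Matrix.submatrix_apply, Matrix.transpose_apply, Matrix.vandermonde_apply,
      Matrix.of_apply, Fin.revPerm_apply, Fin.rev_rev]
    congr 1
    have := i.isLt
    rw [Fin.val_rev]
    omega
  rw [h1, Matrix.det_submatrix_equiv_self, Matrix.det_transpose, Matrix.det_vandermonde]
  rw [← prod_pairs_eq (fun i j => y (Fin.rev j) - y (Fin.rev i))]
  refine Finset.prod_nbij' (fun p => (Fin.rev p.2, Fin.rev p.1))
    (fun p => (Fin.rev p.2, Fin.rev p.1)) ?_ ?_ ?_ ?_ ?_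
  · intro p hp
    exact mem_pairsSet.mpr (by simpa [Fin.rev_lt_rev] using mem_pairsSet.mp hp)
  · intro p hp
    exact mem_pairsSet.mpr (by simpa [Fin.rev_lt_rev] using mem_pairsSet.mp hp)
  · intro p _; simp
  · intro p _; simp
  · intro p _; simp

private lemma pairs_split {k : ℕ} (x : Fin (k + 1) → ℂ) (j : Fin (k + 1)) :
    ∏ p ∈ pairsSet (k + 1), (x p.1 - x p.2)
      = (∏ p ∈ pairsSet k, (x (j.succAbove p.1) - x (j.succAbove p.2)))
        * ((-1) ^ (k - (j : ℕ)) * ∏ i ∈ Finset.univ.erase j, (x i - x j)) := by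
  classical
  rw [← Finset.prod_filter_mul_prod_filter_not (pairsSet (k + 1))
    (fun p => p.1 ≠ j ∧ p.2 ≠ j) (fun p => x p.1 - x p.2)]
  congr 1
  · -- avoid part
    symm
    refine Finset.prod_nbij (fun p => (j.succAbove p.1, j.succAbove p.2)) ?_ ?_ ?_ ?_
    · intro p hp
      simp only [Finset.mem_filter]
      exact ⟨mem_pairsSet.mpr (Fin.succAbove_lt_succAbove_iff.mpr (mem_pairsSet.mp hp)),
        Fin.succAbove_ne j p.1, Fin.succAbove_ne j p.2⟩
    · intro p _ q _ h
      simp only [Prod.mk.injEq] at h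
      exact Prod.ext (Fin.succAbove_right_injective h.1) (Fin.succAbove_right_injective h.2)
    · intro q hq
      simp only [Finset.coe_filter, Set.mem_setOf_eq, Finset.mem_coe] at hq
      obtain ⟨hq1, hq2, hq3⟩ := hq
      obtain ⟨a, ha⟩ := Fin.exists_succAbove_eq hq2
      obtain ⟨b, hb⟩ := Fin.exists_succAbove_eq hq3
      refine ⟨(a, b), ?_, ?_⟩
      · simp only [Finset.mem_coe]
        apply mem_pairsSet.mpr
        have := mem_pairsSet.mp hq1
        rw [← ha, ← hb] at this
        exact Fin.succAbove_lt_succAbove_iff.mp this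
      · simp [ha, hb]
    · intro p _; rfl
  · -- pairs through j
    have hset : (pairsSet (k + 1)).filter (fun p => ¬(p.1 ≠ j ∧ p.2 ≠ j))
        = ((Finset.Iio j).map ⟨fun i => (i, j), fun a b h => by simpa using congrArg Prod.fst h⟩)
          ∪ ((Finset.Ioi j).map ⟨fun l => (j, l), fun a b h => by simpa using congrArg Prod.snd h⟩) := by
      ext p
      simp only [Finset.mem_filter, mem_pairsSet, Finset.mem_union, Finset.mem_map,
        Finset.mem_Iio, Finset.mem_Ioi, Function.Embedding.coeFn_mk, not_and_or, not_not]
      constructor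
      · rintro ⟨hlt, h | h⟩
        · exact Or.inr ⟨p.2, h ▸ hlt, by rw [← h]; rfl⟩
        · exact Or.inl ⟨p.1, h ▸ hlt, by rw [← h]; rfl⟩
      · rintro (⟨i, hi, rfl⟩ | ⟨l, hl, rfl⟩)
        · exact ⟨hi, Or.inr rfl⟩
        · exact ⟨hl, Or.inl rfl⟩
    have hdisj : Disjoint
        ((Finset.Iio j).map ⟨fun i => (i, j), fun a b h => by simpa using congrArg Prod.fst h⟩)
        ((Finset.Ioi j).map ⟨fun l => (j, l), fun a b h => by simpa using congrArg Prod.snd h⟩) := by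
      rw [Finset.disjoint_left]
      rintro p hp hq
      simp only [Finset.mem_map, Finset.mem_Iio, Finset.mem_Ioi,
        Function.Embedding.coeFn_mk] at hp hq
      obtain ⟨i, hi, rfl⟩ := hp
      obtain ⟨l, hl, h⟩ := hq
      have h1 : j = i := congrArg Prod.fst h
      exact absurd h1 hi.ne'
    rw [hset, Finset.prod_union hdisj, Finset.prod_map, Finset.prod_map]
    show (∏ i ∈ Finset.Iio j, (x i - x j)) * ∏ l ∈ Finset.Ioi j, (x j - x l)
        = (-1) ^ (k - (j : ℕ)) * ∏ i ∈ Finset.univ.erase j, (x i - x j)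
    have h2 : ∏ l ∈ Finset.Ioi j, (x j - x l)
        = (-1 : ℂ) ^ (k - (j : ℕ)) * ∏ l ∈ Finset.Ioi j, (x l - x j) := by
      have : ∀ l ∈ Finset.Ioi j, x j - x l = (-1) * (x l - x j) := fun l _ => by ring
      rw [Finset.prod_congr rfl this, Finset.prod_mul_distrib, Finset.prod_const, Fin.card_Ioi]
      norm_num
    have herase : Finset.univ.erase j = Finset.Iio j ∪ Finset.Ioi j := by
      ext i
      simp only [Finset.mem_erase, Finset.mem_univ, and_true, Finset.mem_union,
        Finset.mem_Iio, Finset.mem_Ioi]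
      exact ⟨fun h => h.lt_or_gt, fun h => h.elim (fun h => h.ne) (fun h => h.ne')⟩
    have hdisj2 : Disjoint (Finset.Iio j) (Finset.Ioi j) := by
      rw [Finset.disjoint_left]
      intro a ha hb
      simp only [Finset.mem_Iio] at ha
      simp only [Finset.mem_Ioi] at hb
      exact absurd hb ha.asymm
    rw [h2, herase, Finset.prod_union hdisj2]
    ring

private lemma pairs_ne_zero {n : ℕ} {y : Fin n → ℂ} (hy : Function.Injective y) :
    ∏ p ∈ pairsSet n, (y p.1 - y p.2) ≠ 0 := by
  rw [Finset.prod_ne_zero_iff]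
  intro p hp
  exact sub_ne_zero_of_ne (fun h => (mem_pairsSet.mp hp).ne (hy h))

/-- Cofactor expansion: for `N = k + 1 ≥ 2`, nonzero pairwise distinct `x₁,…,x_N` with
`∏ x_i = 1`, and weakly decreasing `m ∈ ℕ^{N−1}`,
`λ_x(m,0) = Σ_j λ_{x^{(j)}}(m) x_j⁻¹ / ∏_{i≠j}(x_i − x_j)`, where `x^{(j)}` is the tuple
`x` with the entry `x_j` omitted. -/
theorem schur_cofactor_expansion (k : ℕ) (hk : 1 ≤ k) (x : Fin (k + 1) → ℂ)
    (hx0 : ∀ i, x i ≠ 0) (hx : Function.Injective x) (hprod : ∏ i, x i = 1)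
    (m : Fin k → ℕ) (hm : Antitone m) :
    schur x (Fin.snoc m 0)
      = ∑ j : Fin (k + 1),
          schur (fun i => x (j.succAbove i)) m * (x j)⁻¹ /
            ∏ i ∈ Finset.univ.erase j, (x i - x j) := by
  classical
  -- abbreviations
  set V : ℂ := ∏ p ∈ pairsSet (k + 1), (x p.1 - x p.2) with hVdef
  have hV : (Matrix.of fun i j : Fin (k + 1) => x j ^ (k + 1 - 1 - (i : ℕ))).det = V := vdet x
  set B : Fin (k + 1) → Matrix (Fin k) (Fin k) ℂ :=
    fun j => Matrix.of fun i l => x (j.succAbove l) ^ (m i + (k - 1 - (i : ℕ))) with hBdef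
  set Vj : Fin (k + 1) → ℂ :=
    fun j => ∏ p ∈ pairsSet k, (x (j.succAbove p.1) - x (j.succAbove p.2)) with hVjdef
  have hVj : ∀ j, (Matrix.of fun i l : Fin k =>
      (fun i => x (j.succAbove i)) l ^ (k - 1 - (i : ℕ))).det = Vj j := fun j => vdet _
  set E : Fin (k + 1) → ℂ := fun j => ∏ i ∈ Finset.univ.erase j, (x i - x j) with hEdef
  have hVjne : ∀ j, Vj j ≠ 0 := fun j =>
    pairs_ne_zero (fun a b h => Fin.succAbove_right_injective (hx h))
  have hEne : ∀ j, E j ≠ 0 := by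
    intro j
    rw [hEdef]
    apply Finset.prod_ne_zero_iff.mpr
    intro i hi
    exact sub_ne_zero_of_ne (fun h => (Finset.mem_erase.mp hi).1 (hx h))
  have hVne : V ≠ 0 := pairs_ne_zero hx
  -- the numerator determinant expansion
  have hA : (Matrix.of fun i j : Fin (k + 1) =>
      x j ^ ((Fin.snoc m 0 : Fin (k+1) → ℕ) i + (k + 1 - 1 - (i : ℕ)))).det
      = ∑ j : Fin (k + 1), (-1) ^ (k + (j : ℕ)) * ((x j)⁻¹ * (B j).det) := by
    rw [Matrix.det_succ_row _ (Fin.last k)]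
    refine Finset.sum_congr rfl fun j _ => ?_
    have hentry : (Matrix.of fun i j : Fin (k + 1) =>
        x j ^ ((Fin.snoc m 0 : Fin (k+1) → ℕ) i + (k + 1 - 1 - (i : ℕ)))) (Fin.last k) j = 1 := by
      simp [Fin.snoc_last]
    have hsub : ((Matrix.of fun i j : Fin (k + 1) =>
        x j ^ ((Fin.snoc m 0 : Fin (k+1) → ℕ) i + (k + 1 - 1 - (i : ℕ)))).submatrix
          (Fin.last k).succAbove j.succAbove)
        = Matrix.of fun i l => x (j.succAbove l) * (B j) i l := by
      ext i l
      simp only [Matrix.submatrix_apply, Matrix.of_apply, Fin.succAbove_last,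
        Fin.snoc_castSucc, hBdef, Fin.coe_castSucc]
      rw [← pow_succ']
      congr 1
      have := i.isLt
      omega
    have hprodj : ∏ l, x (j.succAbove l) = (x j)⁻¹ := by
      have := Fin.prod_univ_succAbove x j
      rw [hprod] at this
      exact eq_inv_of_mul_eq_one_right this.symm
    rw [hentry, hsub, Matrix.det_mul_row, hprodj, Fin.val_last]
    ring
  -- unfold schur
  unfold schur
  rw [hA, hV, Finset.sum_div]
  refine Finset.sum_congr rfl fun j _ => ?_
  rw [hVj j]
  have hsplit : V = Vj j * ((-1) ^ (k - (j : ℕ)) * E j) := pairs_split x j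
  have hBj : (Matrix.of fun i l : Fin k =>
      (fun i => x (j.succAbove i)) l ^ (m i + (k - 1 - (i : ℕ)))).det = (B j).det := rfl
  rw [hBj]
  have hsign : ((-1 : ℂ)) ^ (k + (j : ℕ)) = (-1) ^ (k - (j : ℕ)) := by
    have hj : (j : ℕ) ≤ k := Fin.is_le j
    have h : k + (j : ℕ) = (k - (j : ℕ)) + 2 * (j : ℕ) := by omega
    rw [h, pow_add, pow_mul, neg_one_sq, one_pow, mul_one]
  have hsne : ((-1 : ℂ)) ^ (k - (j : ℕ)) ≠ 0 := pow_ne_zero _ (by norm_num)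
  rw [hsplit, hsign]
  have key : ∀ a v e s xj : ℂ, v ≠ 0 → e ≠ 0 → s ≠ 0 →
      s * (xj⁻¹ * a) / (v * (s * e)) = a / v * xj⁻¹ / e := by
    intro a v e s xj hv he hs
    rw [show v * (s * e) = s * (v * e) by ring, mul_div_mul_left _ _ hs,
      div_mul_eq_mul_div, div_div, mul_comm xj⁻¹ a]
  show (-1 : ℂ) ^ (k - (j : ℕ)) * ((x j)⁻¹ * (B j).det)
      / (Vj j * ((-1) ^ (k - (j : ℕ)) * E j)) = (B j).det / Vj j * (x j)⁻¹ / E j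
  exact key ((B j).det) (Vj j) (E j) _ (x j) (hVjne j) (hEne j) hsne
end
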